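/- Let k ≥ 1 and σ ≥ k+1, let β > 0, and let N ≥ 4 be an even integer with ε ≤ N^{−1} and τ = (σ ε / β) ln N ≤ 1/2. Consider the Shishkin mesh x_i = 2(1−τ)i/N for 0 ≤ i ≤ N/2 and x_i = 1−τ + 2τ(i − N/2)/N for N/2 < i ≤ N, with elements I_i = [x_{i−1}, x_i]. Let u ∈ C^{k+2}([0,1]) admit a decomposition u = S + E with |S^{(m)}(x)| ≤ C_d and |E^{(m)}(x)| ≤ C_d ε^{−m} e^{−β(1−x)/ε} for all 0 ≤ m ≤ k+2 and x ∈ [0,1], and let P⁻ denote the elementwise Gauss–Radau projection. Then there is a constant C depending only on k, β, σ, C_d (and not on ε or N) such that ‖S − P⁻S‖_{L²(0, 1−τ)} ≤ C N^{−(k+1)} and ‖u − P⁻u‖_{L²(0, 1−τ)} ≤ C N^{−(k+1)}. -/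

import Mathlib

open Set Polynomial

private def pev (k : ℕ) (c : Fin (k+1) → ℝ) (t : ℝ) : ℝ := ∑ i : Fin (k+1), c i * t ^ (i:ℕ)

private lemma pev_cont (k : ℕ) (c : Fin (k+1) → ℝ) : Continuous (pev k c) := by
  unfold pev
  exact continuous_finset_sum _ (fun i _ => (continuous_const.mul (continuous_pow _)))

private lemma pev_intable (k : ℕ) (c : Fin (k+1) → ℝ) (j : ℕ) (a b : ℝ) :
    IntervalIntegrable (fun t => pev k c t * t ^ j) MeasureTheory.volume a b :=
  (((pev_cont k c).mul (continuous_pow j))).intervalIntegrable a b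

private lemma pev_add (k : ℕ) (c d : Fin (k+1) → ℝ) (t : ℝ) :
    pev k (c + d) t = pev k c t + pev k d t := by
  unfold pev; rw [← Finset.sum_add_distrib]; congr 1; funext i; simp [add_mul]

private lemma pev_smul (k : ℕ) (r : ℝ) (c : Fin (k+1) → ℝ) (t : ℝ) :
    pev k (r • c) t = r * pev k c t := by
  unfold pev; rw [Finset.mul_sum]; congr 1; funext i; simp [mul_assoc]

noncomputable def Tmap (k : ℕ) : (Fin (k+1) → ℝ) →ₗ[ℝ] (Fin (k+1) → ℝ) where
  toFun c := fun j => if (j:ℕ) < k then ∫ t in (-1:ℝ)..1, pev k c t * t ^ (j:ℕ) else pev k c 1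
  map_add' c d := by
    funext j
    by_cases hj : (j:ℕ) < k
    · simp only [hj, if_true, Pi.add_apply]
      rw [← intervalIntegral.integral_add (pev_intable k c _ _ _) (pev_intable k d _ _ _)]
      congr 1; funext t; rw [pev_add]; ring
    · simp only [hj, if_false, Pi.add_apply, pev_add]
  map_smul' r c := by
    funext j
    by_cases hj : (j:ℕ) < k
    · simp only [hj, if_true, RingHom.id_apply, Pi.smul_apply, smul_eq_mul]
      rw [← intervalIntegral.integral_const_mul]
      congr 1; funext t; rw [pev_smul]; ring
    · simp only [hj, if_false, RingHom.id_apply, Pi.smul_apply, smul_eq_mul, pev_smul]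

private lemma Tmap_apply (k : ℕ) (c : Fin (k+1) → ℝ) (j : Fin (k+1)) :
    Tmap k c j = if (j:ℕ) < k then ∫ t in (-1:ℝ)..1, pev k c t * t ^ (j:ℕ) else pev k c 1 := rfl

private lemma Tmap_inj (k : ℕ) : Function.Injective (Tmap k) := by
  rw [← LinearMap.ker_eq_bot, LinearMap.ker_eq_bot']
  intro c hc
  set p : Polynomial ℝ := ∑ i : Fin (k+1), C (c i) * X ^ (i:ℕ) with hp
  have hev : ∀ t, p.eval t = pev k c t := by
    intro t
    rw [hp, eval_finset_sum]; unfold pev; congr 1; funext i; simp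
  have hcomp : ∀ j : Fin (k+1),
      (if (j:ℕ) < k then ∫ t in (-1:ℝ)..1, pev k c t * t ^ (j:ℕ) else pev k c 1) = 0 := by
    intro j; rw [← Tmap_apply k c j, hc]; rfl
  have h1 : p.eval 1 = 0 := by
    have h0 := hcomp ⟨k, Nat.lt_succ_self k⟩
    rw [if_neg (by simp)] at h0
    rw [hev]; exact h0
  have hmom : ∀ j : ℕ, j < k → (∫ t in (-1:ℝ)..1, p.eval t * t ^ j) = 0 := by
    intro j hjk
    have h0 := hcomp ⟨j, hjk.trans (Nat.lt_succ_self k)⟩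
    rw [if_pos hjk] at h0
    have : (∫ t in (-1:ℝ)..1, p.eval t * t ^ j) = ∫ t in (-1:ℝ)..1, pev k c t * t ^ j :=
      intervalIntegral.integral_congr (fun t _ => by rw [hev])
    rw [this]; exact h0
  have hpz : p = 0 := by
    by_contra hp0
    obtain ⟨r, hr⟩ := (dvd_iff_isRoot.mpr h1)
    have hrne : r ≠ 0 := by
      rintro rfl; rw [mul_zero] at hr; exact hp0 hr
    have hXne : (X - C (1:ℝ)) ≠ 0 := X_sub_C_ne_zero 1
    have hdegp : p.natDegree ≤ k := by
      rw [hp]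
      apply Polynomial.natDegree_sum_le_of_forall_le
      intro i _
      exact (natDegree_C_mul_le _ _).trans (by simp [Nat.lt_succ_iff.mp i.isLt])
    have hdegr : r.natDegree < k := by
      have h2 := natDegree_mul hXne hrne
      rw [← hr, natDegree_X_sub_C] at h2
      omega
    have key : (∫ t in (-1:ℝ)..1, p.eval t * r.eval t) = 0 := by
      have hre : ∀ t : ℝ, r.eval t = ∑ j ∈ Finset.range k, r.coeff j * t ^ j := by
        intro t; exact eval_eq_sum_range' hdegr t
      have e1 : (∫ t in (-1:ℝ)..1, p.eval t * r.eval t)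
          = ∫ t in (-1:ℝ)..1, ∑ j ∈ Finset.range k, r.coeff j * (p.eval t * t ^ j) :=
        intervalIntegral.integral_congr (fun t _ => by
          rw [hre t, Finset.mul_sum]; congr 1; funext j; ring)
      rw [e1, intervalIntegral.integral_finset_sum]
      · apply Finset.sum_eq_zero
        intro j hj
        rw [intervalIntegral.integral_const_mul, hmom j (Finset.mem_range.mp hj), mul_zero]
      · intro j _
        exact (continuous_const.mul ((p.continuous_aeval).mul (continuous_pow j))).intervalIntegrable _ _
    have key2 : (∫ t in (-1:ℝ)..1, (1 - t) * r.eval t ^ 2) = 0 := by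
      have e2 : (∫ t in (-1:ℝ)..1, (1 - t) * r.eval t ^ 2)
          = - ∫ t in (-1:ℝ)..1, p.eval t * r.eval t := by
        rw [← intervalIntegral.integral_neg]
        apply intervalIntegral.integral_congr
        intro t _
        simp only [hr, eval_mul, eval_sub, eval_X, eval_C]; ring
      rw [e2, key, neg_zero]
    have hgc : Continuous (fun t : ℝ => (1 - t) * r.eval t ^ 2) :=
      (continuous_const.sub continuous_id).mul ((r.continuous_aeval).pow 2)
    have hint : IntervalIntegrable (fun t : ℝ => (1 - t) * r.eval t ^ 2)
        MeasureTheory.volume (-1) 1 := hgc.intervalIntegrable _ _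
    have hnn : 0 ≤ᵐ[MeasureTheory.volume.restrict (Ioc (-1:ℝ) 1)]
        (fun t : ℝ => (1 - t) * r.eval t ^ 2) := by
      rw [Filter.EventuallyLE, MeasureTheory.ae_restrict_iff' measurableSet_Ioc]
      filter_upwards with t ht
      have h1t : (0:ℝ) ≤ 1 - t := by linarith [ht.2]
      simp only [Pi.zero_apply]
      positivity
    have hae := (intervalIntegral.integral_eq_zero_iff_of_le_of_nonneg_ae
      (by norm_num) hnn hint).mp key2
    have hae' : ∀ᵐ t ∂(MeasureTheory.volume : MeasureTheory.Measure ℝ),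
        t ∈ Ioc (-1:ℝ) 1 → (1 - t) * r.eval t ^ 2 = 0 := by
      rw [← MeasureTheory.ae_restrict_iff' measurableSet_Ioc]
      exact hae
    have hnull : MeasureTheory.volume
        {t : ℝ | ¬ (t ∈ Ioc (-1:ℝ) 1 → (1 - t) * r.eval t ^ 2 = 0)} = 0 := hae'
    have hroots : (MeasureTheory.volume {t : ℝ | r.IsRoot t}) = 0 :=
      (Polynomial.finite_setOf_isRoot hrne).measure_zero _
    have hsubset : Ioo (-1:ℝ) 1 ⊆
        {t : ℝ | ¬ (t ∈ Ioc (-1:ℝ) 1 → (1 - t) * r.eval t ^ 2 = 0)} ∪ {t : ℝ | r.IsRoot t} := by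
      intro t ht
      by_cases hroot : r.IsRoot t
      · exact Or.inr hroot
      · left
        simp only [mem_setOf_eq, Classical.not_imp]
        refine ⟨⟨ht.1, ht.2.le⟩, ?_⟩
        have h1t : (0:ℝ) < 1 - t := by linarith [ht.2]
        have h2 : r.eval t ≠ 0 := hroot
        positivity
    have hzero : MeasureTheory.volume (Ioo (-1:ℝ) 1) = 0 :=
      MeasureTheory.measure_mono_null hsubset (MeasureTheory.measure_union_null hnull hroots)
    rw [Real.volume_Ioo] at hzero
    norm_num at hzero
  funext j
  have hcoeff : p.coeff (j:ℕ) = c j := by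
    rw [hp, finset_sum_coeff, Finset.sum_eq_single j]
    · simp
    · intro i _ hij
      rw [coeff_C_mul, coeff_X_pow, if_neg (fun h => hij (Fin.ext h.symm)), mul_zero]
    · intro h; exact absurd (Finset.mem_univ j) h
  rw [hpz] at hcoeff
  simpa using hcoeff.symm

theorem stabA (k : ℕ) : ∃ C > 0, ∀ p : Polynomial ℝ, p.natDegree ≤ k →
    ∀ s ∈ Icc (-1:ℝ) 1, |p.eval s| ≤
      C * ((∑ j ∈ Finset.range k, |∫ t in (-1:ℝ)..(1:ℝ), p.eval t * t ^ j|) + |p.eval 1|) := by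
  classical
  have hinj := Tmap_inj k
  set T := Tmap k with hT
  let e : (Fin (k+1) → ℝ) ≃ₗ[ℝ] LinearMap.range T := LinearEquiv.ofInjective T hinj
  let g : (LinearMap.range T) →L[ℝ] (Fin (k+1) → ℝ) :=
    LinearMap.toContinuousLinearMap (e.symm : LinearMap.range T →ₗ[ℝ] (Fin (k+1) → ℝ))
  have hbound : ∀ c : Fin (k+1) → ℝ, ‖c‖ ≤ ‖g‖ * ‖T c‖ := by
    intro c
    have hcg : c = g ⟨T c, LinearMap.mem_range_self T c⟩ := by
      show c = e.symm ⟨T c, LinearMap.mem_range_self T c⟩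
      have h2 : (⟨T c, LinearMap.mem_range_self T c⟩ : LinearMap.range T) = e c := rfl
      rw [h2, LinearEquiv.symm_apply_apply]
    calc ‖c‖ = ‖g ⟨T c, LinearMap.mem_range_self T c⟩‖ := by rw [← hcg]
      _ ≤ ‖g‖ * ‖(⟨T c, LinearMap.mem_range_self T c⟩ : LinearMap.range T)‖ := g.le_opNorm _
      _ = ‖g‖ * ‖T c‖ := rfl
  refine ⟨((k:ℝ)+1) * ‖g‖ + 1, by positivity, ?_⟩
  intro p hdeg s hs
  set c : Fin (k+1) → ℝ := fun i => p.coeff (i:ℕ) with hc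
  have hev : ∀ t, pev k c t = p.eval t := by
    intro t
    rw [eval_eq_sum_range' (Nat.lt_succ_of_le hdeg) t]
    unfold pev
    exact Fin.sum_univ_eq_sum_range (fun i => p.coeff i * t ^ i) (k+1)
  have habs : |p.eval s| ≤ ((k:ℝ)+1) * ‖c‖ := by
    rw [← hev]
    unfold pev
    calc |∑ i : Fin (k+1), c i * s^(i:ℕ)| ≤ ∑ i : Fin (k+1), |c i * s^(i:ℕ)| :=
          Finset.abs_sum_le_sum_abs _ _
      _ ≤ ∑ _i : Fin (k+1), ‖c‖ := Finset.sum_le_sum (fun i _ => by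
          rw [abs_mul]
          have h1 : |c i| ≤ ‖c‖ := by rw [← Real.norm_eq_abs]; exact norm_le_pi_norm c i
          have h2 : |s ^ (i:ℕ)| ≤ 1 := by
            rw [abs_pow]
            apply pow_le_one₀ (abs_nonneg s)
            rw [abs_le]; exact ⟨hs.1, hs.2⟩
          calc |c i| * |s^(i:ℕ)| ≤ ‖c‖ * 1 := mul_le_mul h1 h2 (abs_nonneg _) (norm_nonneg c)
            _ = ‖c‖ := mul_one _)
      _ = ((k:ℝ)+1) * ‖c‖ := by
          rw [Finset.sum_const, Finset.card_univ, Fintype.card_fin, nsmul_eq_mul]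
          push_cast; ring
  set R := (∑ j ∈ Finset.range k, |∫ t in (-1:ℝ)..(1:ℝ), p.eval t * t ^ j|) + |p.eval 1| with hRdef
  have hR0 : 0 ≤ R := by positivity
  have hTc : ‖T c‖ ≤ R := by
    rw [pi_norm_le_iff_of_nonneg hR0]
    intro j
    rw [hT, Tmap_apply]
    by_cases hj : (j:ℕ) < k
    · rw [if_pos hj]
      have heq : (∫ t in (-1:ℝ)..1, pev k c t * t^(j:ℕ)) = ∫ t in (-1:ℝ)..1, p.eval t * t^(j:ℕ) :=
        intervalIntegral.integral_congr (fun t _ => by rw [hev])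
      rw [Real.norm_eq_abs, heq]
      have hmem : (j:ℕ) ∈ Finset.range k := Finset.mem_range.mpr hj
      have hle := Finset.single_le_sum
        (f := fun j => |∫ t in (-1:ℝ)..(1:ℝ), p.eval t * t ^ j|)
        (fun i _ => abs_nonneg _) hmem
      exact hle.trans (le_add_of_nonneg_right (abs_nonneg _))
    · rw [if_neg hj, hev, Real.norm_eq_abs]
      exact le_add_of_nonneg_left (by positivity)
  have hgn : (0:ℝ) ≤ ‖g‖ := norm_nonneg g
  calc |p.eval s| ≤ ((k:ℝ)+1) * ‖c‖ := habs
    _ ≤ ((k:ℝ)+1) * (‖g‖ * ‖T c‖) :=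
        mul_le_mul_of_nonneg_left (hbound c) (by positivity)
    _ ≤ ((k:ℝ)+1) * (‖g‖ * R) :=
        mul_le_mul_of_nonneg_left (mul_le_mul_of_nonneg_left hTc hgn) (by positivity)
    _ = (((k:ℝ)+1) * ‖g‖) * R := by ring
    _ ≤ (((k:ℝ)+1) * ‖g‖ + 1) * R := by nlinarith

theorem stabB (k : ℕ) : ∃ C > 0, ∀ (p : Polynomial ℝ) (a b M : ℝ), p.natDegree ≤ k → a < b →
    0 ≤ M →
    (∀ j < k, |∫ t in a..b, p.eval t * ((2*t - a - b)/(b-a))^j| ≤ M * (b - a)) →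
    |p.eval b| ≤ M → ∀ t ∈ Icc a b, |p.eval t| ≤ (C * (2*k+1)) * M := by
  obtain ⟨CA, hCA, hA⟩ := stabA k
  refine ⟨CA, hCA, ?_⟩
  intro p a b M hdeg hab hM hmom hend t ht
  have hba : (0:ℝ) < b - a := by linarith
  have hbane : b - a ≠ 0 := ne_of_gt hba
  set cc : ℝ := (b - a)/2 with hccdef
  set dd : ℝ := (a + b)/2 with hdddef
  have hcc : (0:ℝ) < cc := by rw [hccdef]; linarith
  have hccne : cc ≠ 0 := ne_of_gt hcc
  set ph : Polynomial ℝ := p.comp (Polynomial.C dd + Polynomial.C cc * Polynomial.X) with hph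
  have hevph : ∀ s : ℝ, ph.eval s = p.eval (dd + cc * s) := by
    intro s; rw [hph]; simp [eval_comp]
  have hdegph : ph.natDegree ≤ k := by
    rw [hph, natDegree_comp]
    have h1 : (Polynomial.C dd + Polynomial.C cc * Polynomial.X).natDegree ≤ 1 := by
      apply (natDegree_add_le _ _).trans
      simp only [natDegree_C]
      apply max_le (by norm_num)
      exact (natDegree_mul_le).trans (by simp)
    calc p.natDegree * (Polynomial.C dd + Polynomial.C cc * Polynomial.X).natDegree
        ≤ p.natDegree * 1 := Nat.mul_le_mul_left _ h1
      _ ≤ k := by omega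
  -- moments of ph
  have hmomph : ∀ j < k, |∫ s in (-1:ℝ)..(1:ℝ), ph.eval s * s ^ j| ≤ 2 * M := by
    intro j hj
    have hsub : ∀ s : ℝ, ph.eval s * s ^ j
        = (fun t => p.eval t * ((2*t - a - b)/(b-a))^j) (cc * s + dd) := by
      intro s
      simp only
      rw [hevph]
      have : (2*(cc * s + dd) - a - b)/(b-a) = s := by
        rw [hccdef, hdddef]; field_simp; ring
      rw [this, add_comm dd (cc*s)]
    have heq : (∫ s in (-1:ℝ)..(1:ℝ), ph.eval s * s ^ j)
        = cc⁻¹ * ∫ t in (cc * (-1) + dd)..(cc * 1 + dd),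
            p.eval t * ((2*t - a - b)/(b-a))^j := by
      rw [intervalIntegral.integral_congr (g :=
        (fun s => (fun t => p.eval t * ((2*t - a - b)/(b-a))^j) (cc * s + dd)))
        (fun s _ => hsub s)]
      rw [intervalIntegral.integral_comp_mul_add
        (fun t => p.eval t * ((2*t - a - b)/(b-a))^j) hccne dd]
      simp [smul_eq_mul]
    have hab1 : cc * (-1) + dd = a := by rw [hccdef, hdddef]; ring
    have hab2 : cc * 1 + dd = b := by rw [hccdef, hdddef]; ring
    rw [heq, hab1, hab2, abs_mul, abs_inv]
    rw [abs_of_pos hcc]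
    have := hmom j hj
    calc cc⁻¹ * |∫ t in a..b, p.eval t * ((2*t - a - b)/(b-a))^j|
        ≤ cc⁻¹ * (M * (b - a)) := by
          apply mul_le_mul_of_nonneg_left this (by positivity)
      _ = 2 * M := by rw [hccdef]; field_simp
  -- endpoint
  have hendph : |ph.eval 1| ≤ M := by
    rw [hevph]
    have : dd + cc * 1 = b := by rw [hccdef, hdddef]; ring
    rw [this]; exact hend
  -- apply
  set s : ℝ := (2*t - a - b)/(b-a) with hsdef
  have hts : dd + cc * s = t := by rw [hsdef, hccdef, hdddef]; field_simp; ring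
  have hsmem : s ∈ Icc (-1:ℝ) 1 := by
    constructor
    · rw [hsdef, le_div_iff₀ hba]; linarith [ht.1]
    · rw [hsdef, div_le_one hba]; linarith [ht.2]
  have := hA ph hdegph s hsmem
  rw [hevph, hts] at this
  calc |p.eval t| ≤ CA * ((∑ j ∈ Finset.range k,
          |∫ u in (-1:ℝ)..(1:ℝ), ph.eval u * u ^ j|) + |ph.eval 1|) := this
    _ ≤ CA * ((∑ _j ∈ Finset.range k, 2 * M) + M) := by
        apply mul_le_mul_of_nonneg_left _ hCA.le
        apply add_le_add _ hendph
        exact Finset.sum_le_sum (fun j hj => hmomph j (Finset.mem_range.mp hj))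
    _ = (CA * (2*k+1)) * M := by
        rw [Finset.sum_const, Finset.card_range, nsmul_eq_mul]
        push_cast; ring

lemma iterTransfer {w : ℝ → ℝ} {n : ℕ} (hw : ContDiffOn ℝ (n:ℕ∞) w (Icc 0 1))
    {a b : ℝ} (hab : a < b) (hsub : Icc a b ⊆ Icc (0:ℝ) 1) :
    ∀ m, m ≤ n → ∀ t ∈ Icc a b,
      iteratedDerivWithin m w (Icc a b) t = iteratedDerivWithin m w (Icc 0 1) t := by
  intro m
  induction m with
  | zero => intro _ t _; simp [iteratedDerivWithin_zero]
  | succ m IH =>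
    intro hmn t ht
    have hmn' : m ≤ n := by omega
    have hm_lt : (m : WithTop ℕ∞) < ((n : ℕ∞) : WithTop ℕ∞) := by
      exact_mod_cast (by omega : m < n)
    have hUab : UniqueDiffOn ℝ (Icc a b) := uniqueDiffOn_Icc hab
    have hU01 : UniqueDiffOn ℝ (Icc (0:ℝ) 1) := uniqueDiffOn_Icc (by norm_num)
    have hdiff : DifferentiableWithinAt ℝ (iteratedDerivWithin m w (Icc 0 1)) (Icc 0 1) t :=
      (hw.differentiableOn_iteratedDerivWithin hm_lt hU01) t (hsub ht)
    rw [iteratedDerivWithin_succ,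
        iteratedDerivWithin_succ]
    rw [derivWithin_congr (fun y hy => IH hmn' y hy) (IH hmn' t ht)]
    exact derivWithin_subset hsub (hUab.uniqueDiffWithinAt ht) hdiff

lemma taylorBound (k : ℕ) {w : ℝ → ℝ} {a b D : ℝ} (hab : a < b)
    (hsub : Icc a b ⊆ Icc (0:ℝ) 1)
    (hw : ContDiffOn ℝ ((k+1 : ℕ) : ℕ∞) w (Icc 0 1))
    (hD : ∀ t ∈ Icc a b, |iteratedDerivWithin (k+1) w (Icc 0 1) t| ≤ D) :
    ∃ q : Polynomial ℝ, q.natDegree ≤ k ∧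
      ∀ t ∈ Icc a b, |w t - q.eval t| ≤ D * (b - a)^(k+1) := by
  have hD0 : 0 ≤ D := le_trans (abs_nonneg _) (hD a ⟨le_refl a, hab.le⟩)
  set q : Polynomial ℝ := ∑ i ∈ Finset.range (k+1),
    Polynomial.C ((i.factorial : ℝ)⁻¹ * iteratedDerivWithin i w (Icc a b) a)
      * (Polynomial.X - Polynomial.C a)^i with hq
  have hdeg : q.natDegree ≤ k := by
    rw [hq]
    apply Polynomial.natDegree_sum_le_of_forall_le
    intro i hi
    apply (Polynomial.natDegree_C_mul_le _ _).trans
    rw [Polynomial.natDegree_pow, Polynomial.natDegree_X_sub_C, mul_one]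
    exact Nat.lt_succ_iff.mp (Finset.mem_range.mp hi)
  have hqeval : ∀ t : ℝ, q.eval t = taylorWithinEval w k (Icc a b) a t := by
    intro t
    rw [taylor_within_apply, hq, Polynomial.eval_finset_sum]
    congr 1; funext i
    simp only [Polynomial.eval_mul, Polynomial.eval_C, Polynomial.eval_pow,
      Polynomial.eval_sub, Polynomial.eval_X, smul_eq_mul]
    ring
  refine ⟨q, hdeg, ?_⟩
  intro t ht
  have hw' : ContDiffOn ℝ ((k+1 : ℕ) : ℕ∞) w (Icc a b) := hw.mono hsub
  have hC : ∀ y ∈ Icc a b, ‖iteratedDerivWithin (k+1) w (Icc a b) y‖ ≤ D := by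
    intro y hy
    rw [Real.norm_eq_abs, iterTransfer hw hab hsub (k+1) (le_refl _) y hy]
    exact hD y hy
  have := taylor_mean_remainder_bound (f := w) (n := k) hab.le (by exact_mod_cast hw') ht hC
  rw [Real.norm_eq_abs] at this
  rw [hqeval]
  calc |w t - taylorWithinEval w k (Icc a b) a t| ≤ D * (t - a)^(k+1) / k.factorial := this
    _ ≤ D * (b - a)^(k+1) / k.factorial := by
        have hpow : (t - a)^(k+1) ≤ (b - a)^(k+1) :=
          pow_le_pow_left₀ (by linarith [ht.1]) (by linarith [ht.2]) _
        have hfac : (0:ℝ) < k.factorial := Nat.cast_pos.mpr k.factorial_pos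
        exact (div_le_div_iff_of_pos_right hfac).mpr (mul_le_mul_of_nonneg_left hpow hD0)
    _ ≤ D * (b - a)^(k+1) := by
        have hba : (0:ℝ) ≤ b - a := by linarith
        apply div_le_self (mul_nonneg hD0 (pow_nonneg hba _))
        exact_mod_cast Nat.one_le_iff_ne_zero.mpr k.factorial_ne_zero

lemma elemBound (k : ℕ) (CB : ℝ)
    (hstab : ∀ (p : Polynomial ℝ) (a b M : ℝ), p.natDegree ≤ k → a < b → 0 ≤ M →
      (∀ j < k, |∫ t in a..b, p.eval t * ((2*t - a - b)/(b-a))^j| ≤ M * (b - a)) →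
      |p.eval b| ≤ M → ∀ t ∈ Icc a b, |p.eval t| ≤ CB * M)
    {w : ℝ → ℝ} (hwc : ContinuousOn w (Icc 0 1))
    {a b : ℝ} (hab : a < b) (hsub : Icc a b ⊆ Icc (0:ℝ) 1)
    {P pi : Polynomial ℝ} (hPdeg : P.natDegree ≤ k) (hpideg : pi.natDegree ≤ k)
    {M : ℝ} (hM : 0 ≤ M)
    (hnear : ∀ t ∈ Icc a b, |w t - pi.eval t| ≤ M)
    (hmom : ∀ q : Polynomial ℝ, q.natDegree ≤ k - 1 →
        (∫ t in a..b, P.eval t * q.eval t) = ∫ t in a..b, w t * q.eval t)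
    (hend : P.eval b = w b) :
    ∀ t ∈ Icc a b, |w t - P.eval t| ≤ (1 + CB) * M := by
  have hba : (0:ℝ) < b - a := by linarith
  have huIcc : uIcc a b = Icc a b := uIcc_of_le hab.le
  have hwc' : ContinuousOn w (uIcc a b) := by rw [huIcc]; exact hwc.mono hsub
  set p : Polynomial ℝ := P - pi with hpd
  have hdegp : p.natDegree ≤ k := (Polynomial.natDegree_sub_le _ _).trans (max_le hPdeg hpideg)
  have hIpol : ∀ f g : Polynomial ℝ,
      IntervalIntegrable (fun t => f.eval t * g.eval t) MeasureTheory.volume a b :=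
    fun f g => ((f.continuous_aeval).mul (g.continuous_aeval)).intervalIntegrable a b
  have hIw : ∀ g : Polynomial ℝ,
      IntervalIntegrable (fun t => w t * g.eval t) MeasureTheory.volume a b :=
    fun g => (hwc'.mul (g.continuous_aeval).continuousOn).intervalIntegrable
  have hIwpi : ∀ g : Polynomial ℝ,
      IntervalIntegrable (fun t => (w t - pi.eval t) * g.eval t) MeasureTheory.volume a b :=
    fun g => ((hwc'.sub (pi.continuous_aeval).continuousOn).mul
      (g.continuous_aeval).continuousOn).intervalIntegrable
  have hbase : ∀ t ∈ Icc a b, |(2*t - a - b)/(b-a)| ≤ 1 := by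
    intro t ht
    rw [abs_div, abs_of_pos hba, div_le_one hba, abs_le]
    constructor <;> [linarith [ht.1]; linarith [ht.2]]
  have hmomp : ∀ j < k, |∫ t in a..b, p.eval t * ((2*t - a - b)/(b-a))^j| ≤ M * (b - a) := by
    intro j hj
    set qj : Polynomial ℝ :=
      (Polynomial.C (2/(b-a)) * Polynomial.X - Polynomial.C ((a+b)/(b-a)))^j with hqj
    have hbase_eq : ∀ t : ℝ,
        (Polynomial.C (2/(b-a)) * Polynomial.X - Polynomial.C ((a+b)/(b-a))).eval t
          = (2*t - a - b)/(b-a) := by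
      intro t
      simp only [Polynomial.eval_sub, Polynomial.eval_mul, Polynomial.eval_C, Polynomial.eval_X]
      field_simp
      ring
    have hqj_eval : ∀ t : ℝ, qj.eval t = ((2*t - a - b)/(b-a))^j := by
      intro t; rw [hqj, Polynomial.eval_pow, hbase_eq]
    have hqj_deg : qj.natDegree ≤ k - 1 := by
      rw [hqj, Polynomial.natDegree_pow]
      have h1 : (Polynomial.C (2/(b-a)) * Polynomial.X
          - Polynomial.C ((a+b)/(b-a))).natDegree ≤ 1 := by
        apply (Polynomial.natDegree_sub_le _ _).trans
        apply max_le _ (by simp)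
        exact (Polynomial.natDegree_C_mul_le _ _).trans (by simp)
      calc j * (Polynomial.C (2/(b-a)) * Polynomial.X
            - Polynomial.C ((a+b)/(b-a))).natDegree ≤ j * 1 := Nat.mul_le_mul_left _ h1
        _ ≤ k - 1 := by omega
    have e1 : (∫ t in a..b, p.eval t * ((2*t - a - b)/(b-a))^j)
        = ∫ t in a..b, (w t - pi.eval t) * qj.eval t := by
      have s1 : (∫ t in a..b, p.eval t * ((2*t - a - b)/(b-a))^j)
          = ∫ t in a..b, (P.eval t * qj.eval t - pi.eval t * qj.eval t) := by
        apply intervalIntegral.integral_congr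
        intro t _
        simp only [hpd, Polynomial.eval_sub, hqj_eval]
        ring
      rw [s1, intervalIntegral.integral_sub (hIpol P qj) (hIpol pi qj), hmom qj hqj_deg,
        ← intervalIntegral.integral_sub (hIw qj) (hIpol pi qj)]
      apply intervalIntegral.integral_congr
      intro t _
      ring
    rw [e1]
    have hboundI : ∀ t ∈ Set.uIoc a b, ‖(w t - pi.eval t) * qj.eval t‖ ≤ M := by
      intro t ht
      have ht' : t ∈ Icc a b := by
        rw [uIoc_of_le hab.le] at ht
        exact ⟨ht.1.le, ht.2⟩
      rw [Real.norm_eq_abs, abs_mul, hqj_eval]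
      have hq1 : |((2*t - a - b)/(b-a))^j| ≤ 1 := by
        rw [abs_pow]
        exact pow_le_one₀ (abs_nonneg _) (hbase t ht')
      calc |w t - pi.eval t| * |((2*t - a - b)/(b-a))^j|
          ≤ M * 1 := mul_le_mul (hnear t ht') hq1 (abs_nonneg _) hM
        _ = M := mul_one M
    have := intervalIntegral.norm_integral_le_of_norm_le_const hboundI
    rw [Real.norm_eq_abs] at this
    calc |∫ t in a..b, (w t - pi.eval t) * qj.eval t| ≤ M * |b - a| := this
      _ = M * (b - a) := by rw [abs_of_pos hba]
  have hendp : |p.eval b| ≤ M := by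
    rw [hpd, Polynomial.eval_sub, hend]
    exact hnear b ⟨hab.le, le_refl b⟩
  have hp := hstab p a b M hdegp hab hM hmomp hendp
  intro t ht
  have h1 := hnear t ht
  have h2 := hp t ht
  have : w t - P.eval t = (w t - pi.eval t) - p.eval t := by
    rw [hpd, Polynomial.eval_sub]; ring
  rw [this]
  calc |(w t - pi.eval t) - p.eval t| ≤ |w t - pi.eval t| + |p.eval t| := abs_sub _ _
    _ ≤ M + CB * M := add_le_add h1 h2
    _ = (1 + CB) * M := by ring

lemma sqIntBound {f : ℝ → ℝ} {a b B : ℝ} (hab : a ≤ b) (hf : ContinuousOn f (Icc a b))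
    (hB : ∀ t ∈ Icc a b, |f t| ≤ B) : (∫ t in a..b, (f t)^2) ≤ B^2 * (b - a) := by
  have huIcc : uIcc a b = Icc a b := uIcc_of_le hab
  have hint : IntervalIntegrable (fun t => (f t)^2) MeasureTheory.volume a b := by
    apply ContinuousOn.intervalIntegrable
    rw [huIcc]
    exact hf.pow 2
  have h1 : (∫ t in a..b, (f t)^2) ≤ ∫ _t in a..b, B^2 := by
    apply intervalIntegral.integral_mono_on hab hint intervalIntegrable_const
    intro t ht
    have := abs_le.mp (hB t ht)
    nlinarith [this.1, this.2]
  calc (∫ t in a..b, (f t)^2) ≤ ∫ _t in a..b, B^2 := h1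
    _ = B^2 * (b - a) := by rw [intervalIntegral.integral_const, smul_eq_mul]; ring

set_option maxHeartbeats 1000000 in
/-- `L²` bounds on the coarse region `(0, 1−τ)` of the Shishkin mesh for the
Gauss–Radau projection errors of the smooth part and of the solution:
`‖S − P⁻S‖_{L²(0,1−τ)} ≤ C N^{−(k+1)}` and `‖u − P⁻u‖_{L²(0,1−τ)} ≤ C N^{−(k+1)}`,
with `C` independent of `ε` and `N`. -/
theorem statement13 (k : ℕ) (hk : 1 ≤ k) (β σ Cd : ℝ)
    (hβ : 0 < β) (hσ : (k : ℝ) + 1 ≤ σ) (hCd : 0 < Cd) :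
    ∃ C > 0, ∀ (N : ℕ) (ε τ : ℝ) (x : ℕ → ℝ) (u S E : ℝ → ℝ)
      (Pu PS : ℕ → Polynomial ℝ),
      4 ≤ N → N % 2 = 0 →
      0 < ε → ε ≤ (N : ℝ)⁻¹ →
      τ = σ * ε / β * Real.log N → τ ≤ 1 / 2 →
      (∀ i ≤ N / 2, x i = 2 * (1 - τ) * i / N) →
      (∀ i, N / 2 < i → i ≤ N → x i = 1 - τ + 2 * τ * ((i : ℝ) - (N / 2 : ℕ)) / N) →
      ContDiffOn ℝ (k + 2 : ℕ) S (Icc 0 1) →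
      ContDiffOn ℝ (k + 2 : ℕ) E (Icc 0 1) →
      (∀ t ∈ Icc (0:ℝ) 1, u t = S t + E t) →
      (∀ m ≤ k + 2, ∀ t ∈ Icc (0:ℝ) 1,
        |iteratedDerivWithin m S (Icc 0 1) t| ≤ Cd) →
      (∀ m ≤ k + 2, ∀ t ∈ Icc (0:ℝ) 1,
        |iteratedDerivWithin m E (Icc 0 1) t| ≤
          Cd / ε ^ m * Real.exp (-β * (1 - t) / ε)) →
      (∀ i ∈ Finset.Icc 1 N, (Pu i).natDegree ≤ k) →
      (∀ i ∈ Finset.Icc 1 N, ∀ q : Polynomial ℝ, q.natDegree ≤ k - 1 →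
        (∫ t in (x (i - 1))..(x i), (Pu i).eval t * q.eval t)
          = ∫ t in (x (i - 1))..(x i), u t * q.eval t) →
      (∀ i ∈ Finset.Icc 1 N, (Pu i).eval (x i) = u (x i)) →
      (∀ i ∈ Finset.Icc 1 N, (PS i).natDegree ≤ k) →
      (∀ i ∈ Finset.Icc 1 N, ∀ q : Polynomial ℝ, q.natDegree ≤ k - 1 →
        (∫ t in (x (i - 1))..(x i), (PS i).eval t * q.eval t)
          = ∫ t in (x (i - 1))..(x i), S t * q.eval t) →
      (∀ i ∈ Finset.Icc 1 N, (PS i).eval (x i) = S (x i)) →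
      Real.sqrt (∑ i ∈ Finset.Icc 1 (N / 2), ∫ t in (x (i - 1))..(x i),
          (S t - (PS i).eval t) ^ 2) ≤ C * ((N : ℝ) ^ (k + 1))⁻¹ ∧
      Real.sqrt (∑ i ∈ Finset.Icc 1 (N / 2), ∫ t in (x (i - 1))..(x i),
          (u t - (Pu i).eval t) ^ 2) ≤ C * ((N : ℝ) ^ (k + 1))⁻¹ := by
  obtain ⟨CB0, hCB0, hstab0⟩ := stabB k
  set CB : ℝ := CB0 * (2*(k:ℝ)+1) with hCBdef
  have hCB : 0 < CB := mul_pos hCB0 (by positivity)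
  have hposC : (0:ℝ) < (1 + CB) * Cd * (2^(k+1) + 1) := by
    have h1 : (0:ℝ) < 1 + CB := by linarith
    have h2 : (0:ℝ) < (2:ℝ)^(k+1) + 1 := by positivity
    exact mul_pos (mul_pos h1 hCd) h2
  refine ⟨(1 + CB) * Cd * (2^(k+1) + 1), hposC, ?_⟩
  intro N ε τ x u S E Pu PS hN4 hNev hε hεN hτdef hτhalf hxc hxf hS hE hu hSb hEb
    hPudeg hPumom hPuend hPSdeg hPSmom hPSend
  have hN4R : (4:ℝ) ≤ (N:ℝ) := by exact_mod_cast hN4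
  have hN0 : (0:ℝ) < N := by linarith
  have hN1 : (1:ℝ) ≤ N := by linarith
  have hlog : 0 ≤ Real.log N := Real.log_nonneg hN1
  have hσ0 : (0:ℝ) < σ := lt_of_lt_of_le (by positivity) hσ
  have hτ0 : (0:ℝ) ≤ τ := by
    rw [hτdef]
    exact mul_nonneg (div_nonneg (mul_nonneg hσ0.le hε.le) hβ.le) hlog
  have hhalf : (1:ℝ)/2 ≤ 1 - τ := by linarith
  set Q : ℝ := ((N:ℝ)^(k+1))⁻¹ with hQdef
  have hQ0 : (0:ℝ) < Q := by positivity
  set Cfin : ℝ := (1 + CB) * Cd * (2^(k+1) + 1) with hCfin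
  have hCfin0 : (0:ℝ) ≤ Cfin := by
    rw [hCfin]
    have : (0:ℝ) ≤ 1 + CB := by linarith
    positivity
  have hexp : Real.exp (-(σ * Real.log N)) ≤ Q := by
    have h1 : Real.exp (-(σ * Real.log N)) ≤ Real.exp (-(((k:ℝ)+1) * Real.log N)) := by
      apply Real.exp_le_exp.mpr
      nlinarith
    have h2 : Real.exp (-(((k:ℝ)+1) * Real.log N)) = Q := by
      rw [Real.exp_neg, hQdef]
      congr 1
      rw [show (((k:ℝ)+1) * Real.log N) = ((k+1:ℕ):ℝ) * Real.log N by push_cast; ring]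
      rw [Real.exp_nat_mul, Real.exp_log hN0]
    linarith
  have hucont : ContinuousOn u (Icc (0:ℝ) 1) :=
    (hS.continuousOn.add hE.continuousOn).congr (fun t ht => hu t ht)
  -- per-element bounds
  have key : ∀ i ∈ Finset.Icc 1 (N/2),
      (∀ t ∈ Icc (x (i-1)) (x i), |S t - (PS i).eval t| ≤ Cfin * Q) ∧
      (∀ t ∈ Icc (x (i-1)) (x i), |u t - (Pu i).eval t| ≤ Cfin * Q) ∧
      x (i-1) < x i ∧ x i - x (i-1) = 2*(1-τ)/N ∧ Icc (x (i-1)) (x i) ⊆ Icc (0:ℝ) 1 := by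
    intro i hi
    obtain ⟨hi1, hi2⟩ := Finset.mem_Icc.mp hi
    have hiN : i ∈ Finset.Icc 1 N := Finset.mem_Icc.mpr ⟨hi1, le_trans hi2 (Nat.div_le_self N 2)⟩
    have hxa : x (i-1) = 2*(1-τ)*((i:ℝ)-1)/N := by
      rw [hxc (i-1) (by omega), Nat.cast_sub hi1]
      norm_num
    have hxb : x i = 2*(1-τ)*(i:ℝ)/N := hxc i hi2
    have h2i : (2*i : ℕ) ≤ N := by
      have := Nat.div_mul_le_self N 2
      omega
    have h2iR : 2*(i:ℝ) ≤ (N:ℝ) := by exact_mod_cast h2i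
    have hdiff : x i - x (i-1) = 2*(1-τ)/N := by
      rw [hxa, hxb]
      field_simp
      ring
    have hab : x (i-1) < x i := by
      rw [← sub_pos, hdiff]
      have h1τ : (0:ℝ) < 1 - τ := by linarith
      positivity
    have ha0 : 0 ≤ x (i-1) := by
      rw [hxa]
      have hi1R : (1:ℝ) ≤ (i:ℝ) := by exact_mod_cast hi1
      have h1 : (0:ℝ) ≤ (i:ℝ)-1 := by linarith
      have h1τ : (0:ℝ) ≤ 1 - τ := by linarith
      positivity
    have hb1τ : x i ≤ 1 - τ := by
      rw [hxb, div_le_iff₀ hN0]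
      nlinarith
    have hsub : Icc (x (i-1)) (x i) ⊆ Icc (0:ℝ) 1 :=
      Icc_subset_Icc ha0 (by linarith)
    -- Taylor approximation of S
    have hwS : ContDiffOn ℝ (((k+1 : ℕ)) : ℕ∞) S (Icc 0 1) := by
      apply hS.of_le
      norm_cast
      exact_mod_cast Nat.le_succ (k+1)
    have hDs : ∀ t ∈ Icc (x (i-1)) (x i), |iteratedDerivWithin (k+1) S (Icc 0 1) t| ≤ Cd :=
      fun t ht => hSb (k+1) (by omega) t (hsub ht)
    obtain ⟨pi, hpideg, hpi⟩ := taylorBound k hab hsub hwS hDs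
    set MS : ℝ := Cd * (x i - x (i-1))^(k+1) with hMSdef
    have hMS0 : (0:ℝ) ≤ MS := by
      rw [hMSdef]
      have h1 : (0:ℝ) ≤ x i - x (i-1) := by linarith
      positivity
    have hMSle : MS ≤ Cd * 2^(k+1) * Q := by
      rw [hMSdef, hdiff]
      have h2 : (0:ℝ) ≤ 2*(1-τ)/N := by
        have h1τ : (0:ℝ) ≤ 1 - τ := by linarith
        positivity
      have h1 : 2*(1-τ)/N ≤ 2/N := by
        gcongr
        linarith
      calc Cd * (2*(1-τ)/N)^(k+1) ≤ Cd * (2/N)^(k+1) :=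
            mul_le_mul_of_nonneg_left (pow_le_pow_left₀ h2 h1 _) hCd.le
        _ = Cd * 2^(k+1) * Q := by
            rw [div_pow, hQdef, div_eq_mul_inv]
            ring
    have heS := elemBound k CB hstab0 hS.continuousOn hab hsub (hPSdeg i hiN) hpideg hMS0
      hpi (hPSmom i hiN) (hPSend i hiN)
    -- E is small on the coarse region
    have hEsm : ∀ t ∈ Icc (x (i-1)) (x i), |E t| ≤ Cd * Real.exp (-(σ * Real.log N)) := by
      intro t ht
      have h0 := hEb 0 (by omega) t (hsub ht)
      rw [iteratedDerivWithin_zero] at h0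
      simp only [pow_zero, div_one] at h0
      have hτε : β * τ / ε = σ * Real.log N := by
        rw [hτdef]
        field_simp
      have hexp2 : Real.exp (-β*(1-t)/ε) ≤ Real.exp (-(σ * Real.log N)) := by
        apply Real.exp_le_exp.mpr
        rw [← hτε]
        have h1t : τ ≤ 1 - t := by
          have := le_trans ht.2 hb1τ
          linarith
        have h3 : β*τ ≤ β*(1-t) := mul_le_mul_of_nonneg_left h1t hβ.le
        have h4 := mul_le_mul_of_nonneg_right (neg_le_neg h3) (inv_nonneg.mpr hε.le)
        calc -β*(1-t)/ε = -(β*(1-t)) * ε⁻¹ := by ring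
          _ ≤ -(β*τ) * ε⁻¹ := h4
          _ = -(β * τ / ε) := by ring
      calc |E t| ≤ Cd * Real.exp (-β*(1-t)/ε) := h0
        _ ≤ Cd * Real.exp (-(σ * Real.log N)) := mul_le_mul_of_nonneg_left hexp2 hCd.le
    set ME : ℝ := Cd * Real.exp (-(σ * Real.log N)) with hMEdef
    have hME0 : (0:ℝ) ≤ ME := by
      rw [hMEdef]
      positivity
    have hMEle : ME ≤ Cd * Q := by
      rw [hMEdef]
      exact mul_le_mul_of_nonneg_left hexp hCd.le
    have hunear : ∀ t ∈ Icc (x (i-1)) (x i), |u t - pi.eval t| ≤ MS + ME := by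
      intro t ht
      rw [hu t (hsub ht)]
      have he : S t + E t - pi.eval t = (S t - pi.eval t) + E t := by ring
      rw [he]
      calc |(S t - pi.eval t) + E t| ≤ |S t - pi.eval t| + |E t| := abs_add_le _ _
        _ ≤ MS + ME := add_le_add (hpi t ht) (hEsm t ht)
    have heU := elemBound k CB hstab0 hucont hab hsub (hPudeg i hiN) hpideg
      (by linarith : (0:ℝ) ≤ MS + ME) hunear (hPumom i hiN) (hPuend i hiN)
    have h1CB : (0:ℝ) ≤ 1 + CB := by linarith
    refine ⟨?_, ?_, hab, hdiff, hsub⟩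
    · intro t ht
      calc |S t - (PS i).eval t| ≤ (1 + CB) * MS := heS t ht
        _ ≤ (1 + CB) * (Cd * 2^(k+1) * Q) := mul_le_mul_of_nonneg_left hMSle h1CB
        _ = (1 + CB) * Cd * 2^(k+1) * Q := by ring
        _ ≤ (1 + CB) * Cd * (2^(k+1) + 1) * Q := by
            have hc1 : (0:ℝ) ≤ (1+CB)*Cd := mul_nonneg h1CB hCd.le
            have h5 : (1+CB) * Cd * 2^(k+1) ≤ (1+CB) * Cd * (2^(k+1)+1) := by
              rw [mul_assoc ((1+CB)) Cd, mul_assoc ((1+CB)) Cd]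
              rw [← mul_assoc, ← mul_assoc]
              exact mul_le_mul_of_nonneg_left (by linarith) hc1
            exact mul_le_mul_of_nonneg_right h5 hQ0.le
        _ = Cfin * Q := by rw [hCfin]
    · intro t ht
      have h2 : MS + ME ≤ Cd * 2^(k+1) * Q + Cd * Q := add_le_add hMSle hMEle
      calc |u t - (Pu i).eval t| ≤ (1 + CB) * (MS + ME) := heU t ht
        _ ≤ (1 + CB) * (Cd * 2^(k+1) * Q + Cd * Q) := mul_le_mul_of_nonneg_left h2 h1CB
        _ = Cfin * Q := by rw [hCfin]; ring
  -- generic L² bound over the coarse region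
  have main : ∀ (w : ℝ → ℝ) (P : ℕ → Polynomial ℝ),
      ContinuousOn w (Icc (0:ℝ) 1) →
      (∀ i ∈ Finset.Icc 1 (N/2), ∀ t ∈ Icc (x (i-1)) (x i), |w t - (P i).eval t| ≤ Cfin * Q) →
      Real.sqrt (∑ i ∈ Finset.Icc 1 (N/2), ∫ t in (x (i-1))..(x i), (w t - (P i).eval t)^2)
        ≤ Cfin * Q := by
    intro w P hwc hsup
    have hsum : (∑ i ∈ Finset.Icc 1 (N/2), ∫ t in (x (i-1))..(x i), (w t - (P i).eval t)^2)
        ≤ (Cfin * Q)^2 := by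
      have hstep : ∀ i ∈ Finset.Icc 1 (N/2),
          (∫ t in (x (i-1))..(x i), (w t - (P i).eval t)^2)
            ≤ (Cfin*Q)^2 * (2*(1-τ)/N) := by
        intro i hi
        obtain ⟨_, _, habi, hdiffi, hsubi⟩ := key i hi
        have hconti : ContinuousOn (fun t => w t - (P i).eval t) (Icc (x (i-1)) (x i)) :=
          (hwc.mono hsubi).sub ((P i).continuous_aeval).continuousOn
        have := sqIntBound habi.le hconti (hsup i hi)
        rw [hdiffi] at this
        exact this
      calc (∑ i ∈ Finset.Icc 1 (N/2), ∫ t in (x (i-1))..(x i), (w t - (P i).eval t)^2)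
          ≤ ∑ _i ∈ Finset.Icc 1 (N/2), (Cfin*Q)^2 * (2*(1-τ)/N) := Finset.sum_le_sum hstep
        _ = ((N/2 : ℕ) : ℝ) * ((Cfin*Q)^2 * (2*(1-τ)/N)) := by
            rw [Finset.sum_const, Nat.card_Icc, nsmul_eq_mul]
            norm_num
        _ ≤ (Cfin*Q)^2 := by
            have h1 : ((N/2:ℕ):ℝ) ≤ (N:ℝ)/2 := Nat.cast_div_le
            have h2 : (0:ℝ) ≤ 2*(1-τ)/N := by
              have h1τ : (0:ℝ) ≤ 1 - τ := by linarith
              positivity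
            have h3 : ((N/2:ℕ):ℝ) * (2*(1-τ)/N) ≤ 1 := by
              calc ((N/2:ℕ):ℝ) * (2*(1-τ)/N) ≤ ((N:ℝ)/2) * (2*(1-τ)/N) :=
                    mul_le_mul_of_nonneg_right h1 h2
                _ = 1 - τ := by field_simp
                _ ≤ 1 := by linarith
            calc ((N/2:ℕ):ℝ) * ((Cfin*Q)^2 * (2*(1-τ)/N))
                = (Cfin*Q)^2 * (((N/2:ℕ):ℝ) * (2*(1-τ)/N)) := by ring
              _ ≤ (Cfin*Q)^2 * 1 := mul_le_mul_of_nonneg_left h3 (sq_nonneg _)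
              _ = (Cfin*Q)^2 := mul_one _
    have hCQ : (0:ℝ) ≤ Cfin * Q := mul_nonneg hCfin0 hQ0.le
    calc Real.sqrt (∑ i ∈ Finset.Icc 1 (N/2), ∫ t in (x (i-1))..(x i), (w t - (P i).eval t)^2)
        ≤ Real.sqrt ((Cfin * Q)^2) := Real.sqrt_le_sqrt hsum
      _ = Cfin * Q := Real.sqrt_sq hCQ
  constructor
  · exact main S PS hS.continuousOn (fun i hi => (key i hi).1)
  · exact main u Pu hucont (fun i hi => (key i hi).2.1)
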